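/- Let X and Z be measurable spaces and n ∈ ℕ. For every measurable space W and every transition kernel τ from the product measurable space (Fin n → X) × Z to W satisfying τ((x ∘ σ, z), ·) = τ((x, z), ·) for every permutation σ of Fin n, every x : Fin n → X and every z ∈ Z, there exists a unique transition kernel τ' from X^{(n)} × Z to W such that τ'((F(x), z), ·) = τ((x, z), ·) for all x and z. That is, X^{(n)} × Z, with the deterministic kernel of F × id_Z, is the equaliser of the morphisms (n!-symmetries) ⊗ Z, so the monoidal product distributes over the equaliser in the opposite category of s-finite transition kernels. -/

import Mathlib

open MeasureTheory ProbabilityTheory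
open scoped ProbabilityTheory

/-- The setoid on `Fin n → X` identifying tuples up to permutation of coordinates. -/
def symSetoid (X : Type*) (n : ℕ) : Setoid (Fin n → X) where
  r x y := ∃ σ : Equiv.Perm (Fin n), x ∘ σ = y
  iseqv := by
    refine ⟨fun x => ⟨1, ?_⟩, ?_, ?_⟩
    · funext i; simp
    · rintro x y ⟨σ, rfl⟩
      exact ⟨σ⁻¹, by funext i; simp⟩
    · rintro x y z ⟨σ, rfl⟩ ⟨τ, rfl⟩
      exact ⟨σ * τ, by funext i; simp [Equiv.Perm.mul_apply]⟩

/-- The symmetric power `X^{(n)}`: the quotient of `Fin n → X` by permutations. -/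
def SymPow (X : Type*) (n : ℕ) : Type _ := Quotient (symSetoid X n)

/-- `X^{(n)}` carries the σ-algebra pushed forward along the quotient map
`F : (Fin n → X) → X^{(n)}`. -/
instance SymPow.instMeasurableSpace (X : Type*) [MeasurableSpace X] (n : ℕ) :
    MeasurableSpace (SymPow X n) :=
  MeasurableSpace.map (Quotient.mk (symSetoid X n)) inferInstance

open MeasurableSpace
open scoped ENNReal

namespace SymPowEq

variable (n : ℕ)

/-- The space of boolean patterns indexed by `Perm (Fin n) × ℕ`. -/
abbrev Om := (Equiv.Perm (Fin n) × ℕ) → Bool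

variable {n}

/-- The action of a permutation on patterns. -/
def hatP (g : Equiv.Perm (Fin n)) : Om n → Om n := fun ω p => ω (g * p.1, p.2)

lemma hatP_comp (g g' : Equiv.Perm (Fin n)) (ω : Om n) :
    hatP g' (hatP g ω) = hatP (g * g') ω := by
  funext p; simp [hatP, mul_assoc]

lemma measurable_hatP (g : Equiv.Perm (Fin n)) : Measurable (hatP (n := n) g) :=
  measurable_pi_iff.mpr fun p => measurable_pi_apply _

variable (n)

noncomputable instance : Denumerable (Equiv.Perm (Fin n) × ℕ) :=
  Classical.choice (nonempty_denumerable_iff.mpr ⟨inferInstance, inferInstance⟩)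

/-- An enumeration of the index set. -/
noncomputable def enc : ℕ → Equiv.Perm (Fin n) × ℕ :=
  (Denumerable.eqv (Equiv.Perm (Fin n) × ℕ)).symm

lemma enc_surjective : Function.Surjective (enc n) :=
  (Denumerable.eqv (Equiv.Perm (Fin n) × ℕ)).symm.surjective

/-- terms of the base-3 encoding -/
noncomputable def aT (ω : Om n) (t : ℕ) : ℝ≥0∞ := if ω (enc n t) then (3⁻¹ : ℝ≥0∞) ^ t else 0

/-- An injective measurable "base-3 encoding" of patterns into `ℝ≥0∞`. -/
noncomputable def hEnc (ω : Om n) : ℝ≥0∞ := ∑' t, aT n ω t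

variable {n}

lemma aT_le (ω : Om n) (t : ℕ) : aT n ω t ≤ (3⁻¹ : ℝ≥0∞) ^ t := by
  unfold aT; split <;> simp

lemma aT_ne_top (ω : Om n) (t : ℕ) : aT n ω t ≠ ⊤ :=
  ((aT_le ω t).trans_lt (by
    refine ENNReal.pow_lt_top ?_
    simp [ENNReal.inv_lt_top])).ne

lemma measurable_hEnc : Measurable (hEnc n) := by
  refine Measurable.ennreal_tsum fun t => ?_
  exact Measurable.ite (by
    have : Measurable fun ω : Om n => ω (enc n t) := measurable_pi_apply _
    exact this (MeasurableSet.singleton true)) measurable_const measurable_const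

lemma hEnc_lt {ω ω' : Om n} (t₀ : ℕ)
    (hag : ∀ t < t₀, ω (enc n t) = ω' (enc n t))
    (h0 : ω (enc n t₀) = false) (h1 : ω' (enc n t₀) = true) :
    hEnc n ω < hEnc n ω' := by
  set r : ℝ≥0∞ := 3⁻¹ with hr
  have hrne0 : r ≠ 0 := by simp [hr]
  have hrnetop : r ≠ ⊤ := by simp [hr]
  set C : ℝ≥0∞ := ∑ t ∈ Finset.range t₀, aT n ω t with hC
  have hCtop : C ≠ ⊤ := by
    rw [hC]
    exact (ENNReal.sum_lt_top.mpr (fun t _ => (aT_ne_top ω t).lt_top)).ne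
  have hCeq : (∑ t ∈ Finset.range t₀, aT n ω' t) = C := by
    rw [hC]
    exact (Finset.sum_congr rfl fun t ht => by
      unfold aT; rw [hag t (Finset.mem_range.mp ht)]).symm
  -- upper bound for hEnc ω
  have hsplit : hEnc n ω = ∑ t ∈ Finset.range (t₀+1), aT n ω t + ∑' t, aT n ω (t + (t₀+1)) :=
    (Summable.sum_add_tsum_nat_add' ENNReal.summable).symm
  have hhead : ∑ t ∈ Finset.range (t₀+1), aT n ω t = C := by
    rw [Finset.sum_range_succ, hC]
    have : aT n ω t₀ = 0 := by unfold aT; rw [h0]; simp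
    rw [this, add_zero]
  have htail : (∑' t, aT n ω (t + (t₀+1))) ≤ r ^ t₀ * (r * (1 - r)⁻¹) := by
    calc (∑' t, aT n ω (t + (t₀+1))) ≤ ∑' t : ℕ, r ^ (t + (t₀+1)) :=
          ENNReal.tsum_le_tsum fun t => aT_le ω _
      _ = ∑' t : ℕ, r ^ (t₀+1) * r ^ t := by
          congr 1; funext t; rw [pow_add, mul_comm]
      _ = r ^ (t₀+1) * (1 - r)⁻¹ := by rw [ENNReal.tsum_mul_left, ENNReal.tsum_geometric]
      _ = r ^ t₀ * (r * (1 - r)⁻¹) := by rw [pow_succ, mul_assoc]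
  have hfac : r * (1 - r)⁻¹ < 1 := by
    have h1r : (2 : ℝ≥0∞)⁻¹ ≤ 1 - r := by
      have h23 : r ≤ 2⁻¹ := by rw [hr]; exact ENNReal.inv_le_inv.mpr (by norm_num)
      have : (2 : ℝ≥0∞)⁻¹ + r ≤ 1 := by
        calc (2 : ℝ≥0∞)⁻¹ + r ≤ 2⁻¹ + 2⁻¹ := add_le_add le_rfl h23
          _ = 1 := ENNReal.inv_two_add_inv_two
      exact ENNReal.le_sub_of_add_le_right hrnetop this
    have h2 : (1 - r)⁻¹ ≤ 2 := by
      have := ENNReal.inv_le_inv.mpr h1r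
      simpa using this
    calc r * (1 - r)⁻¹ ≤ r * 2 := mul_le_mul_right h2 _
      _ = 2 / 3 := by rw [hr, ENNReal.div_eq_inv_mul]
      _ < 1 := by
          rw [ENNReal.div_lt_iff (by norm_num) (by norm_num)]
          norm_num
  have hub : hEnc n ω < C + r ^ t₀ := by
    rw [hsplit, hhead]
    refine lt_of_le_of_lt (add_le_add_right htail _) ?_
    refine ENNReal.add_lt_add_left hCtop ?_
    calc r ^ t₀ * (r * (1 - r)⁻¹) < r ^ t₀ * 1 :=
          ENNReal.mul_lt_mul_right (pow_ne_zero _ hrne0) (ENNReal.pow_ne_top hrnetop) hfac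
      _ = r ^ t₀ := mul_one _
  have hlb : C + r ^ t₀ ≤ hEnc n ω' := by
    have : (∑ t ∈ Finset.range (t₀+1), aT n ω' t) = C + r ^ t₀ := by
      rw [Finset.sum_range_succ, hCeq]
      congr 1
      unfold aT; rw [h1]; simp [hr]
    rw [← this]
    exact ENNReal.sum_le_tsum _
  exact hub.trans_le hlb

lemma hEnc_injective : Function.Injective (hEnc n) := by
  intro ω ω' h
  by_contra hne
  have hex : ∃ t, ω (enc n t) ≠ ω' (enc n t) := by
    by_contra hall
    push_neg at hall
    apply hne
    funext p
    obtain ⟨t, rfl⟩ := enc_surjective n p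
    exact hall t
  set t₀ := Nat.find hex with ht₀
  have hdiff := Nat.find_spec hex
  have hag : ∀ t < t₀, ω (enc n t) = ω' (enc n t) := fun t ht => by
    have := Nat.find_min hex ht
    simpa using this
  rcases Bool.eq_false_or_eq_true (ω (enc n t₀)) with h0 | h0
  · have h1 : ω' (enc n t₀) = false := by
      cases hb : ω' (enc n t₀)
      · rfl
      · exact absurd (h0.trans hb.symm) hdiff
    exact absurd h.symm (hEnc_lt t₀ (fun t ht => (hag t ht).symm) h1 h0).ne
  · have h1 : ω' (enc n t₀) = true := by
      cases hb : ω' (enc n t₀)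
      · exact absurd (h0.trans hb.symm) hdiff
      · rfl
    exact absurd h (hEnc_lt t₀ hag h0 h1).ne

section Sel

lemma exists_min_hat (ω : Om n) :
    ∃ g : Equiv.Perm (Fin n), hEnc n (hatP g ω) = ⨅ g' : Equiv.Perm (Fin n), hEnc n (hatP g' ω) := by
  haveI : Nonempty (Equiv.Perm (Fin n)) := ⟨1⟩
  obtain ⟨g₀, hg₀⟩ := Finite.exists_min (fun g : Equiv.Perm (Fin n) => hEnc n (hatP g ω))
  exact ⟨g₀, le_antisymm (le_iInf hg₀) (iInf_le _ _)⟩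

/-- A measurable, equivariantly-invariant selection of a representative of the orbit
of a pattern under the permutation action. -/
noncomputable def sel (ω : Om n) : Om n := hatP (Classical.choose (exists_min_hat ω)) ω

lemma hEnc_sel (ω : Om n) :
    hEnc n (sel ω) = ⨅ g' : Equiv.Perm (Fin n), hEnc n (hatP g' ω) :=
  Classical.choose_spec (exists_min_hat ω)

lemma sel_eq_of_min {ω : Om n} {g : Equiv.Perm (Fin n)}
    (h : hEnc n (hatP g ω) = ⨅ g' : Equiv.Perm (Fin n), hEnc n (hatP g' ω)) :
    sel ω = hatP g ω :=
  hEnc_injective (by rw [hEnc_sel, h])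

lemma sel_exists (ω : Om n) : ∃ g : Equiv.Perm (Fin n), sel ω = hatP g ω :=
  ⟨Classical.choose (exists_min_hat ω), rfl⟩

lemma iInf_hat_comp (g : Equiv.Perm (Fin n)) (ω : Om n) :
    (⨅ g' : Equiv.Perm (Fin n), hEnc n (hatP g' (hatP g ω)))
      = ⨅ g'' : Equiv.Perm (Fin n), hEnc n (hatP g'' ω) := by
  simp only [hatP_comp]
  refine le_antisymm (le_iInf fun g'' => ?_) (le_iInf fun g' => ?_)
  · refine iInf_le_of_le (g⁻¹ * g'') ?_
    rw [mul_inv_cancel_left]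
  · exact iInf_le _ _

lemma sel_hatP (g : Equiv.Perm (Fin n)) (ω : Om n) : sel (hatP g ω) = sel ω := by
  obtain ⟨g₁, hg₁⟩ := sel_exists (hatP g ω)
  have hmin : hEnc n (hatP (g * g₁) ω) = ⨅ g'' : Equiv.Perm (Fin n), hEnc n (hatP g'' ω) := by
    rw [← hatP_comp, ← hg₁, hEnc_sel, iInf_hat_comp]
  rw [hg₁, hatP_comp]
  exact (sel_eq_of_min hmin).symm

lemma sel_coord_iff (ω : Om n) (p : Equiv.Perm (Fin n) × ℕ) (b : Bool) :
    sel ω p = b ↔ ∃ g : Equiv.Perm (Fin n),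
      hEnc n (hatP g ω) = (⨅ g' : Equiv.Perm (Fin n), hEnc n (hatP g' ω)) ∧ hatP g ω p = b := by
  constructor
  · intro hb
    exact ⟨Classical.choose (exists_min_hat ω), Classical.choose_spec (exists_min_hat ω), hb⟩
  · rintro ⟨g, hg, hb⟩
    rw [sel_eq_of_min hg]; exact hb

lemma measurable_sel : Measurable (sel (n := n)) := by
  refine measurable_pi_iff.mpr fun p => ?_
  refine measurable_to_countable' fun b => ?_
  have : (fun ω : Om n => sel ω p) ⁻¹' {b}
      = ⋃ g : Equiv.Perm (Fin n),
          ({ω : Om n | hEnc n (hatP g ω) = ⨅ g' : Equiv.Perm (Fin n), hEnc n (hatP g' ω)}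
            ∩ {ω : Om n | hatP g ω p = b}) := by
    ext ω
    simp only [Set.mem_preimage, Set.mem_singleton_iff, Set.mem_iUnion, Set.mem_inter_iff,
      Set.mem_setOf_eq]
    exact sel_coord_iff ω p b
  rw [this]
  refine MeasurableSet.iUnion fun g => MeasurableSet.inter ?_ ?_
  · have hf : Measurable fun ω : Om n => hEnc n (hatP g ω) :=
      measurable_hEnc.comp (measurable_hatP g)
    have hg2 : Measurable fun ω : Om n => ⨅ g' : Equiv.Perm (Fin n), hEnc n (hatP g' ω) :=
      Measurable.iInf fun g' => measurable_hEnc.comp (measurable_hatP g')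
    have : {ω : Om n | hEnc n (hatP g ω) = ⨅ g' : Equiv.Perm (Fin n), hEnc n (hatP g' ω)}
        = {ω : Om n | hEnc n (hatP g ω) ≤ ⨅ g' : Equiv.Perm (Fin n), hEnc n (hatP g' ω)}
          ∩ {ω : Om n | (⨅ g' : Equiv.Perm (Fin n), hEnc n (hatP g' ω)) ≤ hEnc n (hatP g ω)} := by
      ext ω; simp only [Set.mem_setOf_eq, Set.mem_inter_iff]
      exact le_antisymm_iff
    rw [this]
    exact (measurableSet_le hf hg2).inter (measurableSet_le hg2 hf)
  · have : Measurable fun ω : Om n => hatP g ω p :=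
      (measurable_pi_apply p).comp (measurable_hatP g)
    exact this (MeasurableSet.singleton b)

end Sel


section Sigma

variable {X Z : Type*} [MeasurableSpace X] [MeasurableSpace Z] {n : ℕ}

/-- The σ-algebra of measurable sets of `Fin n → X` invariant under permutations. -/
def invMS (X : Type*) [MeasurableSpace X] (n : ℕ) : MeasurableSpace (Fin n → X) where
  MeasurableSet' A := MeasurableSet A ∧
    ∀ g : Equiv.Perm (Fin n), (fun x : Fin n → X => x ∘ g) ⁻¹' A = A
  measurableSet_empty := ⟨MeasurableSet.empty, fun g => by simp⟩
  measurableSet_compl A hA := ⟨hA.1.compl, fun g => by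
    rw [Set.preimage_compl, hA.2 g]⟩
  measurableSet_iUnion f hf := ⟨MeasurableSet.iUnion fun i => (hf i).1, fun g => by
    simp only [Set.preimage_iUnion]
    exact Set.iUnion_congr fun i => (hf i).2 g⟩

lemma exists_countable_rect {T : Set ((Fin n → X) × Z)} (hT : MeasurableSet T) :
    ∃ (A : ℕ → Set (Fin n → X)) (B : ℕ → Set Z),
      (∀ i, MeasurableSet (A i)) ∧ (∀ i, MeasurableSet (B i)) ∧
      MeasurableSet[generateFrom (Set.range fun i => A i ×ˢ B i)] T := by
  let m' : MeasurableSpace ((Fin n → X) × Z) :=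
    { MeasurableSet' := fun T => ∃ (A : ℕ → Set (Fin n → X)) (B : ℕ → Set Z),
        (∀ i, MeasurableSet (A i)) ∧ (∀ i, MeasurableSet (B i)) ∧
        MeasurableSet[generateFrom (Set.range fun i => A i ×ˢ B i)] T
      measurableSet_empty := ⟨fun _ => ∅, fun _ => ∅, fun _ => MeasurableSet.empty,
        fun _ => MeasurableSet.empty, @MeasurableSet.empty _ (generateFrom _)⟩
      measurableSet_compl := fun T ⟨A, B, hA, hB, h⟩ => ⟨A, B, hA, hB, h.compl⟩
      measurableSet_iUnion := fun f hf => by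
        choose A B hA hB h using hf
        let e : ℕ ≃ ℕ × ℕ := (Denumerable.eqv (ℕ × ℕ)).symm
        refine ⟨fun t => A (e t).1 (e t).2, fun t => B (e t).1 (e t).2,
          fun t => hA _ _, fun t => hB _ _, ?_⟩
        refine MeasurableSet.iUnion fun i => ?_
        refine generateFrom_mono (s := Set.range fun j => A i j ×ˢ B i j) ?_ _ (h i)
        rintro s ⟨j, rfl⟩
        refine ⟨e.symm (i, j), ?_⟩
        simp only [Equiv.apply_symm_apply]
      }
  have hle : (Prod.instMeasurableSpace : MeasurableSpace ((Fin n → X) × Z)) ≤ m' := by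
    rw [← generateFrom_prod]
    refine generateFrom_le ?_
    rintro s ⟨A, hA, B, hB, rfl⟩
    exact ⟨fun _ => A, fun _ => B, fun _ => hA, fun _ => hB,
      measurableSet_generateFrom ⟨0, rfl⟩⟩
  exact hle _ hT

lemma hatP_one (ω : Om n) : hatP 1 ω = ω := by
  funext p; simp [hatP]

lemma invariant_measurableSet_prod {T : Set ((Fin n → X) × Z)} (hT : MeasurableSet T)
    (hinv : ∀ g : Equiv.Perm (Fin n),
      (fun p : (Fin n → X) × Z => (p.1 ∘ g, p.2)) ⁻¹' T = T) :
    MeasurableSet[(invMS X n).prod inferInstance] T := by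
  classical
  obtain ⟨A, B, hA, hB, hTgen⟩ := exists_countable_rect hT
  set A2 : Equiv.Perm (Fin n) × ℕ → Set (Fin n → X) :=
    fun q => (fun x : Fin n → X => x ∘ q.1) ⁻¹' A q.2 with hA2def
  have hA2 : ∀ q, MeasurableSet (A2 q) := fun q => by
    have hcomp : Measurable fun x : Fin n → X => x ∘ q.1 :=
      measurable_pi_iff.mpr fun j => measurable_pi_apply _
    exact hcomp (hA q.2)
  set α : (Fin n → X) → Om n := fun x q => if x ∈ A2 q then true else false with hαdef
  have hα : Measurable α := measurable_pi_iff.mpr fun q =>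
    Measurable.ite (hA2 q) measurable_const measurable_const
  have hαg : ∀ (g : Equiv.Perm (Fin n)) (x : Fin n → X), α (x ∘ g) = hatP g (α x) := by
    intro g x
    funext q
    have hcg : (x ∘ g) ∘ q.1 = x ∘ ((g * q.1 : Equiv.Perm (Fin n)) : Fin n → Fin n) := by
      funext j; simp
    simp only [hαdef, hatP, hA2def, Set.mem_preimage, hcg]
  have hαone : ∀ (x : Fin n → X) (i : ℕ), (α x (1, i) = true) ↔ x ∈ A i := by
    intro x i
    have : x ∘ ((1 : Equiv.Perm (Fin n)) : Fin n → Fin n) = x := by funext j; simp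
    simp only [hαdef, hA2def, Set.mem_preimage, this]
    split <;> simp_all
  have hcomap : MeasurableSet[MeasurableSpace.comap
      (fun p : (Fin n → X) × Z => (α p.1, p.2)) inferInstance] T := by
    refine (generateFrom_le ?_) _ hTgen
    rintro s ⟨i, rfl⟩
    rw [measurableSet_comap]
    refine ⟨{ω : Om n | ω (1, i) = true} ×ˢ B i, ?_, ?_⟩
    · refine MeasurableSet.prod ?_ (hB i)
      have hev : Measurable fun ω : Om n => ω (1, i) := measurable_pi_apply _
      exact hev (MeasurableSet.singleton true)
    · ext ⟨x, z⟩
      simp only [Set.mem_preimage, Set.mem_prod, Set.mem_setOf_eq]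
      rw [hαone x i]
  obtain ⟨T1, hT1, hT1pre⟩ := measurableSet_comap.mp hcomap
  set β : (Fin n → X) → Om n := fun x => sel (α x) with hβdef
  have hβg : ∀ (g : Equiv.Perm (Fin n)) (x : Fin n → X), β (x ∘ g) = β x := by
    intro g x
    simp only [hβdef]
    rw [hαg, sel_hatP]
  set T2 : Set (Om n × Z) :=
    ⋃ g : Equiv.Perm (Fin n), (fun ωz : Om n × Z => (hatP g ωz.1, ωz.2)) ⁻¹' T1 with hT2def
  have hT2 : MeasurableSet T2 := MeasurableSet.iUnion fun g =>
    (((measurable_hatP g).comp measurable_fst).prodMk measurable_snd) hT1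
  have hT1mem : ∀ (y : Fin n → X) (z : Z), (α y, z) ∈ T1 ↔ (y, z) ∈ T := by
    intro y z
    rw [← hT1pre]
    exact Iff.rfl
  have hTeq : T = (fun p : (Fin n → X) × Z => (β p.1, p.2)) ⁻¹' T2 := by
    ext ⟨x, z⟩
    obtain ⟨g₀, hg₀⟩ := sel_exists (α x)
    simp only [Set.mem_preimage, hT2def, Set.mem_iUnion]
    constructor
    · intro hx
      refine ⟨g₀⁻¹, ?_⟩
      have : hatP g₀⁻¹ (β x) = α x := by
        rw [hβdef]
        simp only
        rw [hg₀, hatP_comp, mul_inv_cancel, hatP_one]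
      rw [this]
      exact (hT1mem x z).mpr hx
    · rintro ⟨g, hg⟩
      have hval : hatP g (β x) = α (x ∘ (g₀ * g : Equiv.Perm (Fin n))) := by
        rw [hβdef]
        simp only
        rw [hg₀, hatP_comp, hαg]
      rw [hval] at hg
      have hmem : (x ∘ ((g₀ * g : Equiv.Perm (Fin n)) : Fin n → Fin n), z) ∈ T :=
        (hT1mem _ z).mp hg
      have := hinv (g₀ * g)
      rw [← this]
      exact hmem
  have hβmeas : Measurable[invMS X n] β := by
    intro s hs
    show MeasurableSet (β ⁻¹' s) ∧
      ∀ g : Equiv.Perm (Fin n), (fun x : Fin n → X => x ∘ g) ⁻¹' (β ⁻¹' s) = β ⁻¹' s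
    refine ⟨(measurable_sel.comp hα) hs, fun g => ?_⟩
    ext x
    simp only [Set.mem_preimage]
    rw [hβg g x]
  have hjm : @Measurable _ _ ((invMS X n).prod inferInstance) _
      (fun p : (Fin n → X) × Z => (β p.1, p.2)) := by
    refine Measurable.prodMk ?_ ?_
    · exact hβmeas.comp (@measurable_fst _ _ (invMS X n) inferInstance)
    · exact @measurable_snd _ _ (invMS X n) inferInstance
  rw [hTeq]
  exact hjm hT2

lemma measurableSet_of_preimage_mk {S : Set (SymPow X n × Z)}
    (h : MeasurableSet
      ((fun p : (Fin n → X) × Z => (Quotient.mk (symSetoid X n) p.1, p.2)) ⁻¹' S)) :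
    MeasurableSet S := by
  set j : (Fin n → X) × Z → SymPow X n × Z :=
    fun p => (Quotient.mk (symSetoid X n) p.1, p.2) with hj
  have hjsurj : Function.Surjective j := by
    rintro ⟨q, z⟩
    obtain ⟨x, hx⟩ := Quotient.exists_rep q
    exact ⟨(x, z), by simp only [hj]; rw [hx]⟩
  have hmk : ∀ (g : Equiv.Perm (Fin n)) (x : Fin n → X),
      Quotient.mk (symSetoid X n) (x ∘ g) = Quotient.mk (symSetoid X n) x :=
    fun g x => (Quotient.sound (show (symSetoid X n).r x (x ∘ ⇑g) from ⟨g, rfl⟩)).symm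
  have hinv : ∀ g : Equiv.Perm (Fin n),
      (fun p : (Fin n → X) × Z => (p.1 ∘ g, p.2)) ⁻¹' (j ⁻¹' S) = j ⁻¹' S := by
    intro g
    ext ⟨x, z⟩
    simp only [Set.mem_preimage, hj, hmk]
  have hmem := invariant_measurableSet_prod h hinv
  have hle : (invMS X n).prod (inferInstance : MeasurableSpace Z)
      ≤ MeasurableSpace.comap j inferInstance := by
    show MeasurableSpace.comap Prod.fst (invMS X n)
        ⊔ MeasurableSpace.comap Prod.snd inferInstance ≤ _
    refine sup_le ?_ ?_
    · rintro s ⟨A, ⟨hAmeas, hAinv⟩, rfl⟩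
      set Astar : Set (SymPow X n) := Quotient.mk (symSetoid X n) '' A with hAstarDef
      have hsat : Quotient.mk (symSetoid X n) ⁻¹' Astar = A := by
        ext x
        simp only [hAstarDef, Set.mem_preimage, Set.mem_image]
        constructor
        · rintro ⟨y, hyA, hyx⟩
          obtain ⟨σ, hσ⟩ := Quotient.exact hyx
          rw [← hσ]
          have := hAinv σ
          rw [← this] at hyA
          exact hyA
        · intro hx
          exact ⟨x, hx, rfl⟩
      have hAstar : MeasurableSet Astar := by
        show MeasurableSet (Quotient.mk (symSetoid X n) ⁻¹' Astar)
        rw [hsat]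
        exact hAmeas
      refine ⟨Prod.fst ⁻¹' Astar, measurable_fst hAstar, ?_⟩
      ext ⟨x, z⟩
      simp only [Set.mem_preimage, hj]
      exact Set.ext_iff.mp hsat x
    · rintro s ⟨Bs, hBs, rfl⟩
      exact ⟨Prod.snd ⁻¹' Bs, measurable_snd hBs, rfl⟩
  obtain ⟨S', hS', hpre⟩ := hle _ hmem
  have : S' = S := hjsurj.preimage_injective hpre
  rw [← this]
  exact hS'

lemma measurable_of_comp_mk {E : Type*} [MeasurableSpace E] {g : SymPow X n × Z → E}
    (h : Measurable fun p : (Fin n → X) × Z => g (Quotient.mk (symSetoid X n) p.1, p.2)) :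
    Measurable g := fun _ hs => measurableSet_of_preimage_mk (h hs)

end Sigma

end SymPowEq

/-- the monoidal product distributes over the symmetric-power equaliser:
every transition kernel `τ` out of `(Fin n → X) × Z` invariant under the `n!` symmetries
acting on the first component factors uniquely through `X^{(n)} × Z`; hence `X^{(n)} × Z`,
with the deterministic kernel of `F × id_Z`, is the equaliser of the morphisms
(n!-symmetries) ⊗ Z in the opposite category of s-finite transition kernels. -/
theorem symPow_tensor_equaliser_of_kernels
    (X Z : Type*) [MeasurableSpace X] [MeasurableSpace Z] (n : ℕ)
    (W : Type*) [MeasurableSpace W]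
    (τ : Kernel ((Fin n → X) × Z) W)
    (hτ : ∀ (σ : Equiv.Perm (Fin n)) (x : Fin n → X) (z : Z), τ (x ∘ σ, z) = τ (x, z)) :
    ∃! τ' : Kernel (SymPow X n × Z) W,
      ∀ (x : Fin n → X) (z : Z), τ' (Quotient.mk (symSetoid X n) x, z) = τ (x, z) := by
  have hwd : ∀ z : Z, ∀ a b : Fin n → X, (symSetoid X n).r a b → τ (a, z) = τ (b, z) := by
    rintro z a b ⟨σ, rfl⟩
    exact (hτ σ a z).symm
  have hmeas : Measurable fun p : SymPow X n × Z =>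
      Quotient.lift (fun x => τ (x, p.2)) (hwd p.2) p.1 := by
    refine Measure.measurable_of_measurable_coe _ fun s hs => ?_
    refine SymPowEq.measurable_of_comp_mk ?_
    exact τ.measurable_coe hs
  refine ⟨⟨fun p => Quotient.lift (fun x => τ (x, p.2)) (hwd p.2) p.1, hmeas⟩,
    fun x z => rfl, ?_⟩
  intro κ hκ
  refine Kernel.ext fun p => ?_
  obtain ⟨q, z⟩ := p
  induction q using Quotient.ind with
  | _ x =>
    rw [hκ x z]
    rfl
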